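/- arXiv:1407.7346 — 3 statements merged into one kernel-verified Lean document; each statement's English description precedes it below -/
import Mathlib

section
/- Let H₀ be a normalized Hadamard matrix of order n with rows and columns indexed by X, with distinguished index x₀. Suppose P₁, Q₁ are permutation matrices of permutations fixing x₀, and P₂, Q₂ are diagonal ±1 matrices, satisfying P₂⁻¹·P₁⁻¹·H₀·Q₁·Q₂ = H₀. Then (P₂, Q₂) = (I, I) or (P₂, Q₂) = (−I, −I), and moreover P₁⁻¹·H₀·Q₁ = H₀. -/
/-- A Hadamard matrix indexed by a finite set `X`. -/
def IsHadamard {X : Type*} [Fintype X] [DecidableEq X] (H : Matrix X X ℝ) : Prop :=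
  (∀ i j, H i j = 1 ∨ H i j = -1) ∧ H * H.transpose = (Fintype.card X : ℝ) • 1

theorem stabilizer_of_normalized_hadamard {X : Type*} [Fintype X] [DecidableEq X]
    (x₀ : X) (H₀ : Matrix X X ℝ) (hH : IsHadamard H₀)
    (hnormRow : ∀ j, H₀ x₀ j = 1) (hnormCol : ∀ i, H₀ i x₀ = 1)
    (σ τ : Equiv.Perm X) (hσ : σ x₀ = x₀) (hτ : τ x₀ = x₀)
    (d e : X → ℝ) (hd : ∀ i, d i = 1 ∨ d i = -1) (he : ∀ i, e i = 1 ∨ e i = -1)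
    (heq : (Matrix.diagonal d)⁻¹ * (σ.permMatrix ℝ)⁻¹ * H₀ *
        τ.permMatrix ℝ * Matrix.diagonal e = H₀) :
    ((Matrix.diagonal d = 1 ∧ Matrix.diagonal e = 1) ∨
      (Matrix.diagonal d = -1 ∧ Matrix.diagonal e = -1)) ∧
    (σ.permMatrix ℝ)⁻¹ * H₀ * τ.permMatrix ℝ = H₀ := by
  have hdd : Matrix.diagonal d * Matrix.diagonal d = 1 := by
    have h1 : (fun i => d i * d i) = fun _ => (1 : ℝ) := by
      funext i; rcases hd i with h | h <;> rw [h] <;> norm_num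
    rw [Matrix.diagonal_mul_diagonal, h1, Matrix.diagonal_one]
  have hdinv : (Matrix.diagonal d)⁻¹ = Matrix.diagonal d := Matrix.inv_eq_right_inv hdd
  have hperm : (σ.permMatrix ℝ)⁻¹ = (σ⁻¹).permMatrix ℝ := by
    apply Matrix.inv_eq_right_inv
    rw [Equiv.Perm.permMatrix, Equiv.Perm.permMatrix, ← PEquiv.toMatrix_trans,
      ← Equiv.toPEquiv_trans]
    rw [show Equiv.trans σ σ⁻¹ = Equiv.refl X from Equiv.self_trans_symm σ,
      Equiv.toPEquiv_refl, PEquiv.toMatrix_refl]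
  rw [hdinv, hperm] at heq
  have hσi : σ⁻¹ x₀ = x₀ := Equiv.Perm.inv_eq_iff_eq.mpr hσ.symm
  have hτi : τ⁻¹ x₀ = x₀ := Equiv.Perm.inv_eq_iff_eq.mpr hτ.symm
  have key : ∀ i j, d i * H₀ (σ⁻¹ i) (τ⁻¹ j) * e j = H₀ i j := by
    intro i j
    have h := congrFun (congrFun heq i) j
    rw [Equiv.Perm.permMatrix, Equiv.Perm.permMatrix, Matrix.mul_assoc (Matrix.diagonal d),
      PEquiv.toMatrix_toPEquiv_mul] at h
    simp only [Matrix.mul_diagonal, PEquiv.mul_toMatrix_apply, ← Equiv.toPEquiv_symm,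
      Equiv.toPEquiv_apply, Matrix.diagonal_mul, Matrix.submatrix_apply, id] at h
    simpa using h
  have hec : ∀ j, e j = d x₀ := by
    intro j
    have h := key x₀ j
    rw [hσi, hnormRow, hnormRow] at h
    rcases hd x₀ with h1 | h1 <;> rw [h1] at h ⊢ <;> linarith
  have hdc : ∀ i, d i = d x₀ := by
    intro i
    have h := key i x₀
    rw [hτi, hnormCol, hnormCol, hec x₀] at h
    rcases hd x₀ with h1 | h1 <;> rw [h1] at h ⊢ <;> nlinarith
  have hids : ∀ i j, H₀ (σ⁻¹ i) (τ⁻¹ j) = H₀ i j := by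
    intro i j
    have h := key i j
    rw [hdc i, hec j] at h
    rcases hd x₀ with h1 | h1 <;> rw [h1] at h <;> linarith
  constructor
  · rcases hd x₀ with h1 | h1
    · left
      have hdf : d = fun _ => (1 : ℝ) := funext fun i => (hdc i).trans h1
      have hef : e = fun _ => (1 : ℝ) := funext fun i => (hec i).trans h1
      rw [hdf, hef, Matrix.diagonal_one]
      exact ⟨rfl, rfl⟩
    · right
      have hdf : d = fun _ => (-1 : ℝ) := funext fun i => (hdc i).trans h1
      have hef : e = fun _ => (-1 : ℝ) := funext fun i => (hec i).trans h1
      have hneg : Matrix.diagonal (fun _ : X => (-1 : ℝ)) = -1 := by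
        ext i j
        by_cases hij : i = j <;> simp [Matrix.diagonal_apply, Matrix.one_apply, hij]
      rw [hdf, hef, hneg]
      exact ⟨rfl, rfl⟩
  · rw [hperm]
    ext i j
    rw [Equiv.Perm.permMatrix, Equiv.Perm.permMatrix, PEquiv.toMatrix_toPEquiv_mul]
    simp only [PEquiv.mul_toMatrix_apply, ← Equiv.toPEquiv_symm, Equiv.toPEquiv_apply,
      Matrix.submatrix_apply, id]
    simpa using hids i j
end

section
/- Let H be a Hadamard matrix of order n indexed by X, fix y ∈ X, and let D_y be the diagonal matrix with −1 in position (y,y) and 1 elsewhere on the diagonal. Then the permutation of X × F₂ × F₂ that swaps (y,0,0) with (y,0,1) and fixes all other vertices is a graph isomorphism from the Hadamard graph Γ(H) to the Hadamard graph Γ(D_y·H). -/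
/-- `(-1)^e` for `e ∈ F₂`. -/
def sgn (e : ZMod 2) : ℝ := if e = 0 then 1 else -1

/-- `H^{T(a)}`: the matrix `H` if `a = 0`, its transpose if `a = 1`. -/
def Ht {X : Type*} (H : Matrix X X ℝ) (a : ZMod 2) : Matrix X X ℝ :=
  if a = 0 then H else H.transpose

/-- The Hadamard graph `Γ(H)` on `X × F₂ × F₂`: `(x,a,b)` is adjacent to `(y,c,d)`
iff `a ≠ c` and `(H^{T(a)})_{x,y} = (-1)^{b+d}`. -/
def hadamardGraph {X : Type*} (H : Matrix X X ℝ) :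
    SimpleGraph (X × ZMod 2 × ZMod 2) :=
  SimpleGraph.fromRel (fun v w => v.2.1 ≠ w.2.1 ∧ Ht H v.2.1 v.1 w.1 = sgn (v.2.2 + w.2.2))

section Aux

variable {X : Type*} [Fintype X] [DecidableEq X]

private lemma zmod2_cases (e : ZMod 2) : e = 0 ∨ e = 1 := by revert e; decide

/-- The underlying map of the swap: shift the last bit iff `x = y` and `a = 0`. -/
private def swapF (y : X) (v : X × ZMod 2 × ZMod 2) : X × ZMod 2 × ZMod 2 :=
  (v.1, v.2.1, v.2.2 + if v.1 = y ∧ v.2.1 = 0 then 1 else 0)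

private lemma swapF_invol (y : X) : Function.Involutive (swapF y) := by
  rintro ⟨x, a, b⟩
  by_cases h : x = y ∧ a = 0 <;> simp [swapF, h]
  rw [add_assoc, show (1 : ZMod 2) + 1 = 0 by decide, add_zero]

private lemma sgn_add_one (e : ZMod 2) : sgn (e + 1) = -sgn e := by
  have h1 : (1 : ZMod 2) + 1 = 0 := by decide
  have h2 : (1 : ZMod 2) ≠ 0 := by decide
  rcases zmod2_cases e with rfl | rfl
  · simp [sgn, h2]
  · rw [h1]; simp [sgn, h2]

private lemma swapF_eq_ite (y : X) (v : X × ZMod 2 × ZMod 2) :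
    swapF y v = if v = (y, 0, 0) then (y, 0, 1) else if v = (y, 0, 1) then (y, 0, 0) else v := by
  obtain ⟨x, a, b⟩ := v
  by_cases hx : x = y
  · subst hx
    rcases zmod2_cases a with rfl | rfl <;> rcases zmod2_cases b with rfl | rfl <;>
      simp [swapF, Prod.ext_iff] <;> decide
  · simp [swapF, hx, Prod.ext_iff]

private lemma rel_iff (H : Matrix X X ℝ) (y : X) (v w : X × ZMod 2 × ZMod 2) :
    ((swapF y v).2.1 ≠ (swapF y w).2.1 ∧
      Ht (Matrix.diagonal (fun z => if z = y then (-1 : ℝ) else 1) * H) (swapF y v).2.1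
        (swapF y v).1 (swapF y w).1 = sgn ((swapF y v).2.2 + (swapF y w).2.2)) ↔
    (v.2.1 ≠ w.2.1 ∧ Ht H v.2.1 v.1 w.1 = sgn (v.2.2 + w.2.2)) := by
  obtain ⟨x, a, b⟩ := v; obtain ⟨z, c, d⟩ := w
  rcases zmod2_cases a with rfl | rfl <;> rcases zmod2_cases c with rfl | rfl
  · simp [swapF]
  · -- a = 0, c = 1
    simp only [swapF, Ht, Matrix.diagonal_mul, if_pos rfl]
    norm_num
    by_cases hx : x = y
    · subst hx
      simp only [if_pos rfl, if_true]
      rw [show (b + 1) + d = (b + d) + 1 by ring, sgn_add_one]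
      exact neg_inj
    · simp [hx]
  · -- a = 1, c = 0
    simp only [swapF, Ht, Matrix.transpose_apply, Matrix.diagonal_mul]
    norm_num
    by_cases hz : z = y
    · subst hz
      simp only [if_pos rfl, if_true]
      rw [show b + (d + 1) = (b + d) + 1 by ring, sgn_add_one]
      simp [Matrix.mul_diagonal]
    · simp [hz]
  · simp [swapF]

end Aux

theorem hadamardGraph_iso_row_negation {X : Type*} [Fintype X] [DecidableEq X]
    (H : Matrix X X ℝ) (hH : IsHadamard H) (y : X) :
    ∃ φ : hadamardGraph H ≃g
        hadamardGraph (Matrix.diagonal (fun z => if z = y then (-1 : ℝ) else 1) * H),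
      ∀ v : X × ZMod 2 × ZMod 2,
        φ v = if v = (y, 0, 0) then (y, 0, 1) else if v = (y, 0, 1) then (y, 0, 0) else v := by
  refine ⟨⟨(swapF_invol y).toPerm, ?_⟩, ?_⟩
  · intro v w
    show (hadamardGraph _).Adj (swapF y v) (swapF y w) ↔ (hadamardGraph H).Adj v w
    simp only [hadamardGraph, SimpleGraph.fromRel_adj]
    rw [rel_iff H y v w, rel_iff H y w v, (swapF_invol y).injective.ne_iff]
  · intro v
    exact swapF_eq_ite y v
end

section
/- Let H be a Hadamard matrix of order n and Γ(H) its Hadamard graph. If x ≠ y are elements of X and a, b, d ∈ F₂, then the vertices (x,a,b) and (y,a,d) have exactly n/2 common neighbors in Γ(H). -/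
lemma sgn_add (u v : ZMod 2) : sgn (u + v) = sgn u * sgn v := by
  have h : (1 : ZMod 2) + 1 = 0 := by decide
  rcases (by decide : ∀ w : ZMod 2, w = 0 ∨ w = 1) u with rfl | rfl <;> rcases (by decide : ∀ w : ZMod 2, w = 0 ∨ w = 1) v with rfl | rfl <;> simp [sgn, h] <;> norm_num

lemma sgn_inj {u v : ZMod 2} (h : sgn u = sgn v) : u = v := by
  rcases (by decide : ∀ w : ZMod 2, w = 0 ∨ w = 1) u with rfl | rfl <;> rcases (by decide : ∀ w : ZMod 2, w = 0 ∨ w = 1) v with rfl | rfl <;> simp_all [sgn] <;> norm_num at h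

lemma zmod2_ne : ∀ a c : ZMod 2, a ≠ c ↔ c = a + 1 := by decide

lemma zmod2_cancel : ∀ u v w : ZMod 2, (u + w) + (v + w) = u + v := by decide

lemma zmod2_cancel' : ∀ u v w : ZMod 2, (u + w) + (u + v) = v + w := by decide

lemma Ht_swap {X : Type*} (H : Matrix X X ℝ) {a c : ZMod 2} (h : c ≠ a) (u z : X) :
    Ht H c z u = Ht H a u z := by
  rcases (by decide : ∀ w : ZMod 2, w = 0 ∨ w = 1) a with rfl | rfl <;> rcases (by decide : ∀ w : ZMod 2, w = 0 ∨ w = 1) c with rfl | rfl <;> simp_all [Ht, Matrix.transpose_apply]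

lemma hadamardGraph_adj_iff {X : Type*} (H : Matrix X X ℝ) (u z : X)
    (a c e' e : ZMod 2) :
    (hadamardGraph H).Adj (u, a, e') (z, c, e) ↔ c = a + 1 ∧ Ht H a u z = sgn (e' + e) := by
  rw [hadamardGraph, SimpleGraph.fromRel_adj]
  constructor
  · rintro ⟨hne, h | h⟩
    · exact ⟨(zmod2_ne a c).mp h.1, h.2⟩
    · obtain ⟨hac, heq⟩ := h
      refine ⟨(zmod2_ne a c).mp (Ne.symm hac), ?_⟩
      rw [← Ht_swap H hac u z, heq, add_comm]
  · rintro ⟨hc, heq⟩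
    have hac : a ≠ c := (zmod2_ne a c).mpr hc
    exact ⟨fun h => hac (congrArg (fun p => p.2.1) h), Or.inl ⟨hac, heq⟩⟩

theorem hadamardGraph_common_neighbors {X : Type*} [Fintype X] [DecidableEq X]
    (n : ℕ) (hn : Fintype.card X = n) (H : Matrix X X ℝ) (hH : IsHadamard H)
    (x y : X) (hxy : x ≠ y) (a b d : ZMod 2) :
    Set.ncard ((hadamardGraph H).neighborSet (x, a, b) ∩
        (hadamardGraph H).neighborSet (y, a, d)) = n / 2 := by
  classical
  obtain ⟨hent', hmul⟩ := hH
  set M : Matrix X X ℝ := Ht H a with hMdef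
  have hent : ∀ i j, M i j = 1 ∨ M i j = -1 := by
    intro i j
    by_cases h : a = 0 <;>
      simp only [hMdef, Ht, h, if_true, if_false, Matrix.transpose_apply,
        one_ne_zero, ite_false, ite_true] <;>
      first
        | exact hent' _ _
        | (simp [Ht, h, Matrix.transpose_apply]; exact hent' _ _)
  have hn1 : (n : ℝ) ≠ 0 := by
    have : 0 < Fintype.card X := Fintype.card_pos_iff.mpr ⟨x⟩
    have : 0 < n := hn ▸ this
    exact_mod_cast this.ne'
  have hMM : M * M.transpose = (n : ℝ) • 1 := by
    by_cases h : a = 0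
    · rw [hMdef]; simp [Ht, h, ← hn, hmul]
    · have h1 : H * ((n : ℝ)⁻¹ • H.transpose) = 1 := by
        rw [Matrix.mul_smul, hmul, hn, smul_smul, inv_mul_cancel₀ hn1, one_smul]
      have h2 : ((n : ℝ)⁻¹ • H.transpose) * H = 1 := mul_eq_one_comm.mp h1
      have h3 : H.transpose * H = (n : ℝ) • 1 := by
        have := congrArg (fun m => (n : ℝ) • m) h2
        simpa [Matrix.smul_mul, smul_smul, mul_inv_cancel₀ hn1] using this
      rw [hMdef]; simp [Ht, h, Matrix.transpose_transpose, h3]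
  have hsum : ∑ z, M x z * M y z = 0 := by
    have h := congrFun (congrFun hMM x) y
    simpa [Matrix.mul_apply, Matrix.transpose_apply, Matrix.smul_apply,
      Matrix.one_apply, hxy] using h
  -- counting lemma
  have hp : ∀ z, M x z * M y z = 1 ∨ M x z * M y z = -1 := by
    intro z
    rcases hent x z with h1 | h1 <;> rcases hent y z with h2 | h2 <;>
      rw [h1, h2] <;> norm_num
  have count : ∀ s : ℝ, s = 1 ∨ s = -1 →
      (Finset.univ.filter (fun z => M x z * M y z = s)).card = n / 2 := by
    set A := Finset.univ.filter (fun z => M x z * M y z = 1) with hAdef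
    set B := Finset.univ.filter (fun z => ¬ (M x z * M y z = 1)) with hBdef
    have hBeq : B = Finset.univ.filter (fun z => M x z * M y z = (-1 : ℝ)) := by
      rw [hBdef]
      apply Finset.filter_congr
      intro z _
      rcases hp z with h | h <;> simp [h] <;> norm_num
    have hAB : A.card + B.card = n := by
      rw [hAdef, hBdef, Finset.card_filter_add_card_filter_not,
        Finset.card_univ, hn]
    have hsumA : ∑ z ∈ A, (M x z * M y z) = (A.card : ℝ) := by
      rw [Finset.sum_congr rfl (fun z hz => (Finset.mem_filter.mp hz).2)]
      simp [hAdef]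
    have hsumB : ∑ z ∈ B, (M x z * M y z) = -(B.card : ℝ) := by
      have : ∀ z ∈ B, M x z * M y z = -1 := by
        intro z hz
        rcases hp z with h | h
        · exact absurd h (Finset.mem_filter.mp hz).2
        · exact h
      rw [Finset.sum_congr rfl this]
      simp
    have hsplit : (A.card : ℝ) + -(B.card : ℝ) = 0 := by
      rw [← hsumA, ← hsumB, hAdef, hBdef,
        Finset.sum_filter_add_sum_filter_not Finset.univ
          (fun z => M x z * M y z = 1) (fun z => M x z * M y z)]
      exact hsum
    have hABeq : A.card = B.card := by
      have : (A.card : ℝ) = (B.card : ℝ) := by linarith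
      exact_mod_cast this
    intro s hs
    rcases hs with rfl | rfl
    · rw [← hAdef]; omega
    · rw [← hBeq]; omega
  -- the bijection
  set e0 : X → ZMod 2 := fun z => b + (if M x z = 1 then 0 else 1) with he0
  have hbb : ∀ t : ZMod 2, b + (b + t) = t := by
    intro t; rw [← add_assoc, CharTwo.add_self_eq_zero, zero_add]
  have hsgn_e0 : ∀ z, sgn (b + e0 z) = M x z := by
    intro z
    rcases hent x z with h | h <;> norm_num [he0, h, hbb, CharTwo.add_self_eq_zero, sgn]
  have he_unique : ∀ z e, M x z = sgn (b + e) → e = e0 z := by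
    intro z e h
    have h2 : sgn (b + e) = sgn (b + e0 z) := by rw [← h, hsgn_e0]
    exact add_left_cancel (sgn_inj h2)
  set T : Set X := {z : X | M x z * M y z = sgn (b + d)} with hT
  set φ : X → X × ZMod 2 × ZMod 2 := fun z => (z, a + 1, e0 z) with hφ
  have hS : ((hadamardGraph H).neighborSet (x, a, b) ∩
      (hadamardGraph H).neighborSet (y, a, d)) = φ '' T := by
    ext ⟨z, c, e⟩
    simp only [Set.mem_inter_iff, SimpleGraph.mem_neighborSet,
      hadamardGraph_adj_iff, ← hMdef, Set.mem_image, hφ, hT, Set.mem_setOf_eq,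
      Prod.mk.injEq]
    constructor
    · rintro ⟨⟨hc, h1⟩, -, h2⟩
      have he : e = e0 z := he_unique z e h1
      subst he
      refine ⟨z, ?_, rfl, hc.symm, rfl⟩
      rw [h1, h2, ← sgn_add, zmod2_cancel b d (e0 z)]
    · rintro ⟨z', hz', rfl, rfl, rfl⟩
      refine ⟨⟨rfl, (hsgn_e0 z').symm⟩, rfl, ?_⟩
      have hxx : M x z' * M x z' = 1 := by
        rcases hent x z' with h | h <;> rw [h] <;> norm_num
      calc M y z' = (M x z' * M x z') * M y z' := by rw [hxx, one_mul]
        _ = M x z' * (M x z' * M y z') := by ring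
        _ = sgn (b + e0 z') * sgn (b + d) := by rw [hz', hsgn_e0]
        _ = sgn (d + e0 z') := by rw [← sgn_add, zmod2_cancel' b d (e0 z')]
  rw [hS, Set.ncard_image_of_injective _ (fun z1 z2 h => congrArg Prod.fst h)]
  have hTF : T = ↑(Finset.univ.filter (fun z => M x z * M y z = sgn (b + d))) := by
    ext z; simp [hT]
  rw [hTF, Set.ncard_coe_finset]
  apply count
  by_cases h : b + d = 0 <;> simp [sgn, h]
end
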